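/- With a_{k,m}(n) the coefficient of z^m q^n in 1/((qz;q)_k (q/z;q)_k), the following recurrence holds: a_{k+1,m}(n) = ∑_{r=0}^{⌊n/(k+1)⌋} ∑_{i=0}^{r} a_{k, m-r+2i}(n - r(k+1)). -/

import Mathlib

/-- `akm k m n` is the coefficient of `z^m q^n` in
`1/((qz;q)_k (q/z;q)_k) = ∏_{i=1}^{k} 1/((1 - z q^i)(1 - q^i/z))`, where
`(x;q)_k = ∏_{i=0}^{k-1} (1 - x q^i)`: it counts pairs `(α, β)` of `k`-tuples of
nonnegative integers with `∑_{i=1}^k i(α_i + β_i) = n` and `∑ α_i - ∑ β_i = m`. -/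
def akm (k : ℕ) (m : ℤ) (n : ℕ) : ℕ :=
  (Finset.univ.filter
    (fun p : (Fin k → Fin (n + 1)) × (Fin k → Fin (n + 1)) =>
      (∑ i : Fin k, (i.1 + 1) * (((p.1 i : ℕ)) + (p.2 i : ℕ)) = n) ∧
      ((∑ i : Fin k, ((p.1 i : ℕ) : ℤ)) - ∑ i : Fin k, ((p.2 i : ℕ) : ℤ)) = m)).card

open Finset
open Fin.NatCast

/-- The set of pairs counted by `akm k m n`, but with values padded to live in `Fin (N+1)`. -/
def akmSet (k : ℕ) (m : ℤ) (n N : ℕ) :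
    Finset ((Fin k → Fin (N + 1)) × (Fin k → Fin (N + 1))) :=
  Finset.univ.filter
    (fun p =>
      (∑ i : Fin k, (i.1 + 1) * (((p.1 i : ℕ)) + (p.2 i : ℕ)) = n) ∧
      ((∑ i : Fin k, ((p.1 i : ℕ) : ℤ)) - ∑ i : Fin k, ((p.2 i : ℕ) : ℤ)) = m)

lemma akm_eq_card_akmSet (k : ℕ) (m : ℤ) (n : ℕ) : akm k m n = (akmSet k m n n).card := rfl

lemma akm_bound {k n N : ℕ} {p : (Fin k → Fin (N + 1)) × (Fin k → Fin (N + 1))}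
    (hp : ∑ i : Fin k, (i.1 + 1) * (((p.1 i : ℕ)) + (p.2 i : ℕ)) = n) (j : Fin k) :
    (p.1 j : ℕ) + (p.2 j : ℕ) ≤ n := by
  have h1 : (j.1 + 1) * (((p.1 j : ℕ)) + (p.2 j : ℕ)) ≤ n := by
    rw [← hp]
    exact Finset.single_le_sum
      (f := fun i : Fin k => (i.1 + 1) * (((p.1 i : ℕ)) + (p.2 i : ℕ)))
      (fun _ _ => Nat.zero_le _) (mem_univ j)
  nlinarith [Nat.zero_le j.1]

lemma akmSet_card (k : ℕ) (m : ℤ) (n N : ℕ) (h : n ≤ N) :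
    (akmSet k m n N).card = akm k m n := by
  rw [akm_eq_card_akmSet]
  refine Finset.card_bij'
    (fun p hp => ((fun j => ((p.1 j : ℕ) : Fin (n + 1))), fun j => ((p.2 j : ℕ) : Fin (n + 1))))
    (fun p hp => ((fun j => ((p.1 j : ℕ) : Fin (N + 1))), fun j => ((p.2 j : ℕ) : Fin (N + 1))))
    ?_ ?_ ?_ ?_
  · intro p hp
    simp only [akmSet, mem_filter, mem_univ, true_and] at hp ⊢
    obtain ⟨hsum, hdiff⟩ := hp
    have k1 : ∀ j : Fin k, (((p.1 j : ℕ) : Fin (n + 1)) : ℕ) = (p.1 j : ℕ) := fun j =>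
      Fin.val_cast_of_lt (Nat.lt_succ_of_le (le_trans (Nat.le_add_right _ _) (akm_bound hsum j)))
    have k2 : ∀ j : Fin k, (((p.2 j : ℕ) : Fin (n + 1)) : ℕ) = (p.2 j : ℕ) := fun j =>
      Fin.val_cast_of_lt (Nat.lt_succ_of_le (le_trans (Nat.le_add_left _ _) (akm_bound hsum j)))
    simp only [k1, k2]
    exact ⟨hsum, hdiff⟩
  · intro p hp
    simp only [akmSet, mem_filter, mem_univ, true_and] at hp ⊢
    obtain ⟨hsum, hdiff⟩ := hp
    have k1 : ∀ j : Fin k, (((p.1 j : ℕ) : Fin (N + 1)) : ℕ) = (p.1 j : ℕ) := fun j =>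
      Fin.val_cast_of_lt (Nat.lt_succ_of_le (le_trans
        (le_trans (Nat.le_add_right _ _) (akm_bound hsum j)) h))
    have k2 : ∀ j : Fin k, (((p.2 j : ℕ) : Fin (N + 1)) : ℕ) = (p.2 j : ℕ) := fun j =>
      Fin.val_cast_of_lt (Nat.lt_succ_of_le (le_trans
        (le_trans (Nat.le_add_left _ _) (akm_bound hsum j)) h))
    simp only [k1, k2]
    exact ⟨hsum, hdiff⟩
  · intro p hp
    simp only [akmSet, mem_filter, mem_univ, true_and] at hp
    obtain ⟨hsum, _⟩ := hp
    refine Prod.ext (funext fun j => Fin.ext ?_) (funext fun j => Fin.ext ?_)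
    · have hb : (p.1 j : ℕ) < n + 1 :=
        Nat.lt_succ_of_le (le_trans (Nat.le_add_right _ _) (akm_bound hsum j))
      have hb' : (p.1 j : ℕ) < N + 1 := by omega
      simp only [Fin.val_natCast]
      rw [Nat.mod_eq_of_lt hb, Nat.mod_eq_of_lt hb']
    · have hb : (p.2 j : ℕ) < n + 1 :=
        Nat.lt_succ_of_le (le_trans (Nat.le_add_left _ _) (akm_bound hsum j))
      have hb' : (p.2 j : ℕ) < N + 1 := by omega
      simp only [Fin.val_natCast]
      rw [Nat.mod_eq_of_lt hb, Nat.mod_eq_of_lt hb']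
  · intro p hp
    simp only [akmSet, mem_filter, mem_univ, true_and] at hp
    obtain ⟨hsum, _⟩ := hp
    refine Prod.ext (funext fun j => Fin.ext ?_) (funext fun j => Fin.ext ?_)
    · have hb : (p.1 j : ℕ) < n + 1 :=
        Nat.lt_succ_of_le (le_trans (Nat.le_add_right _ _) (akm_bound hsum j))
      have hb' : (p.1 j : ℕ) < N + 1 := by omega
      simp only [Fin.val_natCast]
      rw [Nat.mod_eq_of_lt hb', Nat.mod_eq_of_lt hb]
    · have hb : (p.2 j : ℕ) < n + 1 :=
        Nat.lt_succ_of_le (le_trans (Nat.le_add_left _ _) (akm_bound hsum j))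
      have hb' : (p.2 j : ℕ) < N + 1 := by omega
      simp only [Fin.val_natCast]
      rw [Nat.mod_eq_of_lt hb', Nat.mod_eq_of_lt hb]

theorem akm_rec (k : ℕ) (m : ℤ) (n : ℕ) :
    akm (k + 1) m n =
      ∑ r ∈ Finset.range (n / (k + 1) + 1), ∑ i ∈ Finset.range (r + 1),
        akm k (m - r + 2 * i) (n - r * (k + 1)) := by
  have hpad : ∀ r i : ℕ, akm k (m - r + 2 * i) (n - r * (k + 1)) =
      (akmSet k (m - r + 2 * i) (n - r * (k + 1)) n).card :=
    fun r i => (akmSet_card _ _ _ _ (Nat.sub_le _ _)).symm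
  simp_rw [hpad, ← Finset.card_sigma]
  rw [akm_eq_card_akmSet]
  refine Finset.card_bij'
    (fun p hp => ⟨(p.1 (Fin.last k) : ℕ) + (p.2 (Fin.last k) : ℕ),
      (p.2 (Fin.last k) : ℕ), (Fin.init p.1, Fin.init p.2)⟩)
    (fun q hq => (Fin.snoc q.2.2.1 (((q.1 - q.2.1 : ℕ) : Fin (n + 1))),
      Fin.snoc q.2.2.2 ((q.2.1 : ℕ) : Fin (n + 1))))
    ?_ ?_ ?_ ?_
  · intro p hp
    simp only [akmSet, mem_filter, mem_univ, true_and] at hp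
    obtain ⟨hsum, hdiff⟩ := hp
    rw [Fin.sum_univ_castSucc] at hsum
    rw [Fin.sum_univ_castSucc, Fin.sum_univ_castSucc] at hdiff
    simp only [Fin.val_last, Fin.coe_castSucc] at hsum hdiff
    set a := (p.1 (Fin.last k) : ℕ) with ha
    set b := (p.2 (Fin.last k) : ℕ) with hb
    rw [Nat.mul_comm (k + 1) (a + b)] at hsum
    have hrkn : (a + b) * (k + 1) ≤ n := by omega
    refine Finset.mem_sigma.mpr ⟨?_, Finset.mem_sigma.mpr ⟨?_, ?_⟩⟩
    · dsimp only
      rw [Finset.mem_range]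
      have := (Nat.le_div_iff_mul_le (k := k + 1) (by omega)).mpr hrkn
      omega
    · dsimp only
      rw [Finset.mem_range]
      omega
    dsimp only
    simp only [akmSet, mem_filter, mem_univ, true_and]
    constructor
    · simp only [Fin.init, Fin.coe_castSucc]
      omega
    · simp only [Fin.init]
      push_cast
      linarith
  · intro q hq
    obtain ⟨r, i, α, β⟩ := q
    simp only [Finset.mem_sigma, Finset.mem_range, akmSet, mem_filter, mem_univ, true_and] at hq
    obtain ⟨hr, hi, hsum, hdiff⟩ := hq
    have hrn : r * (k + 1) ≤ n := by
      have := (Nat.le_div_iff_mul_le (x := r) (k := k + 1) (y := n) (by omega)).mp (by omega)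
      omega
    have hrr : r ≤ r * (k + 1) := Nat.le_mul_of_pos_right r (by omega)
    have hin : i < n + 1 := by omega
    have hrin : r - i < n + 1 := by omega
    simp only [akmSet, mem_filter, mem_univ, true_and]
    constructor
    · rw [Fin.sum_univ_castSucc]
      simp only [Fin.snoc_castSucc, Fin.snoc_last, Fin.val_last, Fin.coe_castSucc,
        Fin.val_cast_of_lt hin, Fin.val_cast_of_lt hrin]
      rw [show r - i + i = r from by omega, Nat.mul_comm (k + 1) r]
      omega
    · rw [Fin.sum_univ_castSucc, Fin.sum_univ_castSucc]
      simp only [Fin.snoc_castSucc, Fin.snoc_last, Fin.coe_castSucc,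
        Fin.val_cast_of_lt hin, Fin.val_cast_of_lt hrin]
      have : ((r - i : ℕ) : ℤ) = (r : ℤ) - i := by omega
      rw [this]
      linarith
  · intro p hp
    simp only [akmSet, mem_filter, mem_univ, true_and] at hp
    obtain ⟨hsum, _⟩ := hp
    have hbnd : (p.1 (Fin.last k) : ℕ) + (p.2 (Fin.last k) : ℕ) ≤ n := akm_bound hsum _
    refine Prod.ext ?_ ?_
    · show Fin.snoc (Fin.init p.1) _ = p.1
      have : (((p.1 (Fin.last k) : ℕ) + (p.2 (Fin.last k) : ℕ) - (p.2 (Fin.last k) : ℕ) : ℕ)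
          : Fin (n + 1)) = p.1 (Fin.last k) := by
        apply Fin.ext
        rw [Fin.val_cast_of_lt (by omega)]
        omega
      rw [this, Fin.snoc_init_self]
    · show Fin.snoc (Fin.init p.2) _ = p.2
      have : (((p.2 (Fin.last k) : ℕ) : ℕ) : Fin (n + 1)) = p.2 (Fin.last k) := by
        apply Fin.ext
        rw [Fin.val_cast_of_lt (by omega)]
      rw [this, Fin.snoc_init_self]
  · intro q hq
    obtain ⟨r, i, α, β⟩ := q
    simp only [Finset.mem_sigma, Finset.mem_range, akmSet, mem_filter, mem_univ, true_and] at hq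
    obtain ⟨hr, hi, hsum, hdiff⟩ := hq
    have hrn : r * (k + 1) ≤ n := by
      have := (Nat.le_div_iff_mul_le (x := r) (k := k + 1) (y := n) (by omega)).mp (by omega)
      omega
    have hrr : r ≤ r * (k + 1) := Nat.le_mul_of_pos_right r (by omega)
    have hin : i < n + 1 := by omega
    have hrin : r - i < n + 1 := by omega
    simp only [Fin.snoc_last, Fin.init_snoc, Fin.val_cast_of_lt hin, Fin.val_cast_of_lt hrin]
    have h1 : r - i + i = r := by omega
    rw [h1]
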